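/- Let x_0,...,x_{N-1} be distinct real nodes with positive weights w_n, let π_k denote the monic discrete orthogonal polynomial of degree k (0 ≤ k ≤ N-1) and γ_k > 0 the leading coefficient of the orthonormal polynomial p_k = γ_k π_k. Let {w̄_n} be the dual weights and π̄_{N-k} the monic dual orthogonal polynomial of degree N-k. Then for every node x_l, π̄_{N-k}(x_l) = γ_{k-1}^2 · w_l · ∏_{n≠l}(x_l - x_n) · π_{k-1}(x_l). -/

import Mathlib

open Polynomial Finset

lemma divided_diff {N : ℕ} (x : Fin N → ℝ) (hinj : Function.Injective x)
    (f : ℝ[X]) (hf : f.natDegree < N) :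
    ∑ n : Fin N, f.eval (x n) * (∏ m ∈ Finset.univ.erase n, (x n - x m))⁻¹
      = f.coeff (N - 1) := by
  have hvs : Set.InjOn x (Finset.univ : Finset (Fin N)) := Set.injOn_of_injective hinj
  have hcard : #(Finset.univ : Finset (Fin N)) = N := by simp
  have hdeg : f.degree < (#(Finset.univ : Finset (Fin N)) : ℕ) := by
    rw [hcard]
    exact lt_of_le_of_lt degree_le_natDegree (by exact_mod_cast hf)
  have hfe := Lagrange.eq_interpolate hvs hdeg
  conv_rhs => rw [hfe]
  rw [Lagrange.interpolate_apply, finset_sum_coeff]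
  refine (Finset.sum_congr rfl fun i hi => ?_).symm
  have hb : Lagrange.basis Finset.univ x i
      = C (Lagrange.nodalWeight Finset.univ x i) * Lagrange.nodal ((Finset.univ).erase i) x := by
    rw [Lagrange.basis_eq_prod_sub_inv_mul_nodal_div (mem_univ i),
      ← Lagrange.nodal_erase_eq_nodal_div (mem_univ i)]
  have hmono : (Lagrange.nodal ((Finset.univ : Finset (Fin N)).erase i) x).Monic :=
    Lagrange.nodal_monic
  have hnd : (Lagrange.nodal ((Finset.univ : Finset (Fin N)).erase i) x).natDegree = N - 1 := by
    rw [Lagrange.natDegree_nodal, card_erase_of_mem (mem_univ i), hcard]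
  rw [hb, ← mul_assoc, ← C_mul, coeff_C_mul, ← hnd, hmono.coeff_natDegree, mul_one,
    Lagrange.nodalWeight, ← Finset.prod_inv_distrib]

theorem dual_polynomial_at_nodes
    (N k : ℕ) (hk1 : 1 ≤ k) (hk2 : k ≤ N - 1)
    (x : Fin N → ℝ) (hx : StrictMono x)
    (w wbar : Fin N → ℝ) (hw : ∀ n, 0 < w n)
    (hdual : ∀ n, w n * wbar n * ∏ m ∈ Finset.univ.erase n, (x n - x m) ^ 2 = 1)
    (π : Polynomial ℝ) (hπm : π.Monic) (hπd : π.natDegree = k - 1)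
    (γ : ℝ) (hγ : 0 < γ)
    (hnorm : ∑ n : Fin N, γ ^ 2 * (π.eval (x n)) ^ 2 * w n = 1)
    (horth : ∀ m : ℕ, m < k - 1 → ∑ n : Fin N, π.eval (x n) * (x n) ^ m * w n = 0)
    (πbar : Polynomial ℝ) (hπbm : πbar.Monic) (hπbd : πbar.natDegree = N - k)
    (horthbar : ∀ m : ℕ, m < N - k → ∑ n : Fin N, πbar.eval (x n) * (x n) ^ m * wbar n = 0) :
    ∀ l : Fin N, πbar.eval (x l)
      = γ ^ 2 * w l * (∏ n ∈ Finset.univ.erase l, (x l - x n)) * π.eval (x l) := by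
  classical
  have hN2 : 2 ≤ N := by omega
  have hkN : k ≤ N := by omega
  have hγ2 : γ ^ 2 ≠ 0 := by positivity
  have hinj : Function.Injective x := hx.injective
  set D : Fin N → ℝ := fun n => ∏ m ∈ Finset.univ.erase n, (x n - x m) with hDdef
  have hD : ∀ n, D n ≠ 0 := by
    intro n
    refine Finset.prod_ne_zero_iff.mpr fun m hm => sub_ne_zero_of_ne fun h => ?_
    exact (Finset.mem_erase.mp hm).1 (hinj h.symm)
  have hwb : ∀ n, wbar n = (w n * D n ^ 2)⁻¹ := by
    intro n
    have h := hdual n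
    rw [Finset.prod_pow] at h
    have h2 : wbar n * (w n * D n ^ 2) = 1 := by rw [← h]; ring
    exact eq_inv_of_mul_eq_one_left h2
  -- the first k nodes
  set s0 : Finset (Fin N) := Finset.univ.map (Fin.castLEEmb hkN) with hs0
  have hs0card : #s0 = k := by simp [hs0]
  have hmem_s0 : ∀ n : Fin N, n ∈ s0 ↔ (n : ℕ) < k := by
    intro n
    simp only [hs0, Finset.mem_map, Finset.mem_univ, true_and]
    constructor
    · rintro ⟨a, rfl⟩; exact a.2
    · intro hn; exact ⟨⟨(n : ℕ), hn⟩, by ext; simp⟩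
  set v : Fin N → ℝ := fun n => πbar.eval (x n) / (w n * D n) with hv
  set q : ℝ[X] := Lagrange.interpolate s0 x v with hq
  have hvs : Set.InjOn x ↑s0 := Set.injOn_of_injective hinj
  have hqdeg : q.natDegree ≤ k - 1 := by
    have h1 : q.degree < (k : ℕ) := by
      have := Lagrange.degree_interpolate_lt v hvs
      rwa [hs0card] at this
    rcases eq_or_ne q 0 with h | h
    · simp [h]
    · have := (natDegree_lt_iff_degree_lt h).mpr h1
      omega
  have hqval0 : ∀ n ∈ s0, q.eval (x n) = v n := fun n hn =>
    Lagrange.eval_interpolate_at_node v hvs hn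
  set d : Fin N → ℝ := fun n => πbar.eval (x n) * wbar n - q.eval (x n) / D n with hd
  have hd0 : ∀ n : Fin N, (n : ℕ) < k → d n = 0 := by
    intro n hn
    have h1 : q.eval (x n) = v n := hqval0 n ((hmem_s0 n).mpr hn)
    simp only [hd, h1, hv, hwb n]
    ring
  have hdsum : ∀ m : ℕ, m < N - k → ∑ n, d n * x n ^ m = 0 := by
    intro m hm
    have h1 : ∑ n, πbar.eval (x n) * wbar n * x n ^ m = 0 := by
      rw [← horthbar m hm]; exact Finset.sum_congr rfl fun n _ => by ring
    have hdeg2 : (q * X ^ m).natDegree < N - 1 := by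
      have h3 := natDegree_mul_le (p := q) (q := (X : ℝ[X]) ^ m)
      rw [natDegree_X_pow] at h3
      omega
    have h2 : ∑ n, q.eval (x n) / D n * x n ^ m = 0 := by
      have h3 := divided_diff x hinj (q * X ^ m) (by omega)
      rw [coeff_eq_zero_of_natDegree_lt hdeg2] at h3
      rw [← h3]
      refine Finset.sum_congr rfl fun n _ => ?_
      rw [eval_mul, eval_pow, eval_X, div_eq_mul_inv]
      ring
    calc ∑ n, d n * x n ^ m
        = ∑ n, (πbar.eval (x n) * wbar n * x n ^ m - q.eval (x n) / D n * x n ^ m) := by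
          exact Finset.sum_congr rfl fun n _ => by simp only [hd]; ring
      _ = 0 := by rw [Finset.sum_sub_distrib, h1, h2, sub_zero]
  -- Vandermonde step
  have heb : ∀ j : Fin (N - k), k + (j : ℕ) < N := fun j => by omega
  set e : Fin (N - k) → Fin N := fun j => ⟨k + (j : ℕ), heb j⟩ with he
  have heinj : Function.Injective e := by
    intro a b hab
    have : k + (a : ℕ) = k + (b : ℕ) := congrArg Fin.val hab
    exact Fin.ext (by omega)
  have hsum_t : ∀ m : ℕ, m < N - k → ∑ j : Fin (N - k), d (e j) * x (e j) ^ m = 0 := by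
    intro m hm
    have hmap : ∑ n ∈ Finset.univ.map ⟨e, heinj⟩, d n * x n ^ m = ∑ n : Fin N, d n * x n ^ m := by
      refine Finset.sum_subset (Finset.subset_univ _) fun n _ hn => ?_
      have hnk : (n : ℕ) < k := by
        by_contra hcon
        refine hn (Finset.mem_map.mpr ⟨⟨(n : ℕ) - k, by omega⟩, Finset.mem_univ _, ?_⟩)
        exact Fin.ext (by simp [he]; omega)
      rw [hd0 n hnk, zero_mul]
    rw [Finset.sum_map] at hmap
    simpa [hdsum m hm] using hmap
  set M : Matrix (Fin (N - k)) (Fin (N - k)) ℝ := Matrix.vandermonde (fun j => x (e j)) with hM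
  have hdet : IsUnit M.det := by
    refine Ne.isUnit ?_
    rw [hM, Matrix.det_vandermonde]
    refine Finset.prod_ne_zero_iff.mpr fun i _ => Finset.prod_ne_zero_iff.mpr fun j hj =>
      sub_ne_zero_of_ne ?_
    have hij : i < j := Finset.mem_Ioi.mp hj
    have : e i < e j := by
      rw [Fin.lt_def]; simp only [he]; omega
    exact (hx this).ne'
  have hvec : Matrix.vecMul (fun j => d (e j)) M = 0 := by
    funext m
    have := hsum_t (m : ℕ) m.2
    simpa [Matrix.vecMul, dotProduct, hM, Matrix.vandermonde] using this
  have hd' : (fun j => d (e j)) = 0 := by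
    calc (fun j => d (e j)) = Matrix.vecMul (fun j => d (e j)) (M * M⁻¹) := by
          rw [Matrix.mul_nonsing_inv _ hdet, Matrix.vecMul_one]
      _ = Matrix.vecMul (Matrix.vecMul (fun j => d (e j)) M) M⁻¹ :=
          (Matrix.vecMul_vecMul _ _ _).symm
      _ = 0 := by rw [hvec, Matrix.zero_vecMul]
  have hdzero : ∀ n, d n = 0 := by
    intro n
    by_cases hn : (n : ℕ) < k
    · exact hd0 n hn
    · have hne : n = e ⟨(n : ℕ) - k, by omega⟩ := Fin.ext (by simp [he]; omega)
      rw [hne]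
      exact congrFun hd' _
  have hkey : ∀ n, πbar.eval (x n) = w n * D n * q.eval (x n) := by
    intro n
    have h0 := hdzero n
    simp only [hd, sub_eq_zero, hwb n] at h0
    have hDn := hD n
    have hwn := (hw n).ne'
    calc πbar.eval (x n) = πbar.eval (x n) * (w n * D n ^ 2)⁻¹ * (w n * D n ^ 2) := by
          field_simp
      _ = (q.eval (x n) / D n) * (w n * D n ^ 2) := by rw [h0]
      _ = w n * D n * q.eval (x n) := by field_simp
  -- moments of q
  have hAq : ∀ m : ℕ, m ≤ k - 1 → ∑ n, q.eval (x n) * x n ^ m * w n = (πbar * X ^ m).coeff (N - 1) := by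
    intro m hm
    have hb : (πbar * X ^ m).natDegree ≤ N - k + m := by
      have h3 := natDegree_mul_le (p := πbar) (q := (X : ℝ[X]) ^ m)
      rw [natDegree_X_pow, hπbd] at h3
      exact h3
    rw [← divided_diff x hinj _ (by omega)]
    refine Finset.sum_congr rfl fun n _ => ?_
    rw [eval_mul, eval_pow, eval_X, hkey n]
    have hfold : (∏ j ∈ Finset.univ.erase n, (x n - x j)) = D n := rfl
    rw [hfold, eq_mul_inv_iff_mul_eq₀ (hD n)]
    ring
  have hS0 : ∀ m : ℕ, m < k - 1 → ∑ n, q.eval (x n) * x n ^ m * w n = 0 := by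
    intro m hm
    rw [hAq m (by omega)]
    refine coeff_eq_zero_of_natDegree_lt ?_
    have h3 := natDegree_mul_le (p := πbar) (q := (X : ℝ[X]) ^ m)
    rw [natDegree_X_pow, hπbd] at h3
    omega
  have hS1 : ∑ n, q.eval (x n) * x n ^ (k - 1) * w n = 1 := by
    rw [hAq (k - 1) le_rfl]
    have hmon : (πbar * X ^ (k - 1)).Monic := hπbm.mul (monic_X_pow _)
    have hnd : (πbar * X ^ (k - 1)).natDegree = N - 1 := by
      rw [hπbm.natDegree_mul (monic_X_pow _), natDegree_X_pow, hπbd]; omega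
    rw [← hnd]
    exact hmon.coeff_natDegree
  -- moments of π
  have hsumπ2 : ∑ n, π.eval (x n) ^ 2 * w n = (γ ^ 2)⁻¹ := by
    have h1 : γ ^ 2 * ∑ n, π.eval (x n) ^ 2 * w n = 1 := by
      rw [Finset.mul_sum, ← hnorm]
      exact Finset.sum_congr rfl fun n _ => by ring
    field_simp at h1 ⊢
    linarith
  have hT1 : ∑ n, π.eval (x n) * x n ^ (k - 1) * w n = (γ ^ 2)⁻¹ := by
    set s : ℝ[X] := X ^ (k - 1) - π with hs
    have hsd : s.natDegree < k := by
      have h := natDegree_sub_le (X ^ (k - 1) : ℝ[X]) π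
      rw [natDegree_X_pow, hπd, max_self, ← hs] at h
      omega
    have hco : s.coeff (k - 1) = 0 := by
      have hπc : π.coeff (k - 1) = 1 := by rw [← hπd]; exact hπm.coeff_natDegree
      simp [hs, coeff_X_pow, hπc]
    have hzero : ∑ n, π.eval (x n) * s.eval (x n) * w n = 0 := by
      calc ∑ n, π.eval (x n) * s.eval (x n) * w n
          = ∑ n, ∑ m ∈ Finset.range k, s.coeff m * (π.eval (x n) * x n ^ m * w n) := by
            refine Finset.sum_congr rfl fun n _ => ?_
            rw [eval_eq_sum_range' hsd (x n), Finset.mul_sum, Finset.sum_mul]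
            exact Finset.sum_congr rfl fun m _ => by ring
        _ = ∑ m ∈ Finset.range k, s.coeff m * ∑ n, π.eval (x n) * x n ^ m * w n := by
            rw [Finset.sum_comm]
            exact Finset.sum_congr rfl fun m _ => (Finset.mul_sum _ _ _).symm
        _ = 0 := by
            refine Finset.sum_eq_zero fun m hm => ?_
            have hmk : m < k := Finset.mem_range.mp hm
            by_cases hmk1 : m = k - 1
            · rw [hmk1, hco, zero_mul]
            · rw [horth m (by omega), mul_zero]
    have h2 : ∑ n, π.eval (x n) * x n ^ (k - 1) * w n - ∑ n, π.eval (x n) ^ 2 * w n = 0 := by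
      rw [← Finset.sum_sub_distrib, ← hzero]
      refine Finset.sum_congr rfl fun n _ => ?_
      simp only [hs, eval_sub, eval_pow, eval_X]
      ring
    rw [hsumπ2] at h2
    linarith
  -- the difference polynomial
  set ρ : ℝ[X] := q - C (γ ^ 2) * π with hρ
  have hρd : ρ.natDegree < k := by
    have h2 : (C (γ ^ 2) * π).natDegree ≤ k - 1 := by
      have := natDegree_C_mul_le (γ ^ 2) π
      omega
    have h1 : ρ.natDegree ≤ k - 1 := by
      rw [hρ]
      exact le_trans (natDegree_sub_le q (C (γ ^ 2) * π)) (max_le hqdeg h2)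
    omega
  have hρm : ∀ m : ℕ, m < k → ∑ n, ρ.eval (x n) * x n ^ m * w n = 0 := by
    intro m hm
    have hsplit : ∑ n, ρ.eval (x n) * x n ^ m * w n
        = ∑ n, q.eval (x n) * x n ^ m * w n - γ ^ 2 * ∑ n, π.eval (x n) * x n ^ m * w n := by
      rw [Finset.mul_sum, ← Finset.sum_sub_distrib]
      refine Finset.sum_congr rfl fun n _ => ?_
      simp only [hρ, eval_sub, eval_mul, eval_C]
      ring
    by_cases hmk1 : m = k - 1
    · rw [hsplit, hmk1, hS1, hT1]
      field_simp
      norm_num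
    · rw [hsplit, hS0 m (by omega), horth m (by omega), mul_zero, sub_zero]
  have hρnode : ∀ n, ρ.eval (x n) = 0 := by
    have hsq : ∑ n, ρ.eval (x n) ^ 2 * w n = 0 := by
      calc ∑ n, ρ.eval (x n) ^ 2 * w n
          = ∑ n, ∑ m ∈ Finset.range k, ρ.coeff m * (ρ.eval (x n) * x n ^ m * w n) := by
            refine Finset.sum_congr rfl fun n _ => ?_
            rw [sq]
            nth_rewrite 2 [eval_eq_sum_range' hρd (x n)]
            rw [Finset.mul_sum, Finset.sum_mul]
            exact Finset.sum_congr rfl fun m _ => by ring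
        _ = ∑ m ∈ Finset.range k, ρ.coeff m * ∑ n, ρ.eval (x n) * x n ^ m * w n := by
            rw [Finset.sum_comm]
            exact Finset.sum_congr rfl fun m _ => (Finset.mul_sum _ _ _).symm
        _ = 0 := Finset.sum_eq_zero fun m hm => by
            rw [hρm m (Finset.mem_range.mp hm), mul_zero]
    intro n
    have h1 : ∀ i ∈ Finset.univ, 0 ≤ ρ.eval (x i) ^ 2 * w i :=
      fun i _ => mul_nonneg (sq_nonneg _) (hw i).le
    have h2 := (Finset.sum_eq_zero_iff_of_nonneg h1).mp hsq n (Finset.mem_univ n)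
    have h3 : ρ.eval (x n) ^ 2 = 0 := by
      rcases mul_eq_zero.mp h2 with h | h
      · exact h
      · exact absurd h (hw n).ne'
    exact pow_eq_zero_iff (by norm_num) |>.mp h3
  intro l
  have hql : q.eval (x l) = γ ^ 2 * π.eval (x l) := by
    have h := hρnode l
    simp only [hρ, eval_sub, eval_mul, eval_C] at h
    linarith
  have hDl : (∏ n ∈ Finset.univ.erase l, (x l - x n)) = D l := rfl
  rw [hkey l, hql, hDl]
  ring
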